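/- arXiv:1010.2072 — 2 statements merged into one kernel-verified Lean document; each statement's English description precedes it below -/
import Mathlib

section
/- There exists a constant C > 0 such that for every ε ∈ (0,1], every δ ∈ (0, π/2), and every twice continuously differentiable function u : ℝ² → ℂ on the closure of the strip Ω = {(x₁,x₂) : 0 < x₂ < π} with ∫_Ω (|u|² + ‖∇u‖² + ‖∇²u‖²) dx < ∞, one has ∑_{j∈ℤ} ∫_{επj−εδ}^{επj+εδ} |u(x₁, 0)|² dx₁ ≤ C² δ ∫_Ω (|u|² + ‖∇u‖² + ‖∇²u‖²) dx. -/
open Real Set MeasureTheory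

set_option maxHeartbeats 2000000
open Real Set MeasureTheory

lemma half_sq {S : ℝ} (hS : 0 ≤ S) : (S ^ (1/2:ℝ)) ^ 2 = S := by
  rw [← Real.rpow_natCast (S ^ (1/2:ℝ)) 2, ← Real.rpow_mul hS]
  norm_num

lemma cs_int {g : ℝ → ℝ} {a b : ℝ} (hab : a ≤ b) (hg : ContinuousOn g (Icc a b))
    (hg0 : ∀ t ∈ Icc a b, 0 ≤ g t) :
    (∫ t in Ioo a b, g t) ^ 2 ≤ (b - a) * ∫ t in Ioo a b, (g t) ^ 2 := by
  set μ := volume.restrict (Ioo a b) with hμ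
  haveI : IsFiniteMeasure μ := by
    constructor
    rw [hμ, Measure.restrict_apply_univ, Real.volume_Ioo]
    exact ENNReal.ofReal_lt_top
  obtain ⟨M, hM⟩ := isCompact_Icc.exists_bound_of_continuousOn hg
  have hmeas : AEStronglyMeasurable g μ :=
    (hg.mono Ioo_subset_Icc_self).aestronglyMeasurable measurableSet_Ioo
  have hae : ∀ {P : ℝ → Prop}, (∀ t ∈ Ioo a b, P t) → (∀ᵐ t ∂μ, P t) := fun h =>
    (ae_restrict_iff' measurableSet_Ioo).2 (ae_of_all _ h)
  have hg2 : MemLp g (ENNReal.ofReal 2) μ :=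
    MemLp.of_bound hmeas M (hae fun t ht => hM t (Ioo_subset_Icc_self ht))
  have h1 : MemLp (fun _ : ℝ => (1:ℝ)) (ENNReal.ofReal 2) μ := memLp_const 1
  have hpq : Real.HolderConjugate 2 2 := by constructor <;> norm_num
  have H := integral_mul_le_Lp_mul_Lq_of_nonneg (μ := μ) hpq
    (hae fun t ht => hg0 t (Ioo_subset_Icc_self ht))
    (ae_of_all _ fun _ => zero_le_one) hg2 h1
  simp only [mul_one, Real.one_rpow, show (2:ℝ) = ((2:ℕ):ℝ) by norm_num,
    Real.rpow_natCast, one_pow] at H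
  push_cast at H
  have hμuniv : ∫ _t, (1:ℝ) ∂μ = b - a := by
    rw [integral_const, smul_eq_mul, mul_one, hμ, measureReal_restrict_apply_univ,
      Real.volume_real_Ioo_of_le hab]
  rw [hμuniv] at H
  have hS : 0 ≤ ∫ t, (g t) ^ 2 ∂μ := integral_nonneg fun t => sq_nonneg _
  have hg_nonneg : 0 ≤ ∫ t, g t ∂μ :=
    integral_nonneg_of_ae (hae fun t ht => hg0 t (Ioo_subset_Icc_self ht))
  calc (∫ t, g t ∂μ) ^ 2
      ≤ ((∫ t, (g t) ^ 2 ∂μ) ^ (1/(2:ℝ)) * (b - a) ^ (1/(2:ℝ))) ^ 2 := by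
        apply pow_le_pow_left₀ hg_nonneg H
    _ = (b - a) * ∫ t, (g t) ^ 2 ∂μ := by
        rw [mul_pow, half_sq hS, half_sq (by linarith)]; ring
open Real Set MeasureTheory

lemma oneD {f f' : ℝ → ℂ} {a b t₀ : ℝ} (hab : a < b) (ht₀ : t₀ ∈ Icc a b)
    (hf : ContinuousOn f (Icc a b)) (hf' : ContinuousOn f' (Icc a b))
    (hd : ∀ t ∈ Ioo a b, HasDerivAt f (f' t) t) :
    ‖f t₀‖ ^ 2 ≤ (2/(b-a)) * (∫ t in Ioo a b, ‖f t‖ ^ 2)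
      + 2*(b-a) * ∫ t in Ioo a b, ‖f' t‖ ^ 2 := by
  have hba : (0:ℝ) < b - a := by linarith
  set R := ∫ t in Ioo a b, ‖f' t‖ with hRdef
  set S := ∫ t in Ioo a b, ‖f' t‖ ^ 2 with hSdef
  set J := ∫ t in Ioo a b, ‖f t‖ ^ 2 with hJdef
  have hf'norm_int : IntegrableOn (fun t => ‖f' t‖) (Ioo a b) volume :=
    (hf'.norm.integrableOn_Icc).mono_set Ioo_subset_Icc_self
  -- FTC claim
  have key : ∀ t ∈ Icc a b, ‖f t₀‖ ≤ ‖f t‖ + R := by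
    intro t ht
    have bound : ∀ c d : ℝ, c ≤ d → c ∈ Icc a b → d ∈ Icc a b →
        ‖f d - f c‖ ≤ R := by
      intro c d hcd hc hd'
      have hsub : Icc c d ⊆ Icc a b := Icc_subset_Icc hc.1 hd'.2
      have hftc : ∫ y in c..d, f' y = f d - f c := by
        refine intervalIntegral.integral_eq_sub_of_hasDerivAt_of_le hcd
          (hf.mono hsub) (fun x hx => hd x ⟨lt_of_le_of_lt hc.1 hx.1, lt_of_lt_of_le hx.2 hd'.2⟩) ?_
        exact (hf'.mono hsub).intervalIntegrable_of_Icc hcd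
      rw [← hftc]
      refine le_trans (intervalIntegral.norm_integral_le_integral_norm hcd) ?_
      rw [intervalIntegral.integral_of_le hcd]
      refine setIntegral_mono_set hf'norm_int ?_ ?_
      · exact (ae_restrict_iff' measurableSet_Ioo).2 (ae_of_all _ fun t _ => norm_nonneg _)
      · refine MeasureTheory.ae_le_set.2 (measure_mono_null ?_ (Real.volume_singleton (a := b)))
        intro x hx
        simp only [mem_diff, mem_Ioc, mem_Ioo, not_and, not_lt] at hx
        have h1 : a < x := lt_of_le_of_lt hc.1 hx.1.1
        have h2 : b ≤ x := hx.2 h1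
        have h3 : x ≤ b := le_trans hx.1.2 hd'.2
        simp [le_antisymm h3 h2]
    rcases le_total t t₀ with h | h
    · have := bound t t₀ h ht ht₀
      calc ‖f t₀‖ ≤ ‖f t‖ + ‖f t₀ - f t‖ := by
            have := norm_add_le (f t) (f t₀ - f t); simpa using this
        _ ≤ ‖f t‖ + R := by linarith
    · have := bound t₀ t h ht₀ ht
      calc ‖f t₀‖ ≤ ‖f t‖ + ‖f t - f t₀‖ := by
            rw [norm_sub_rev]
            have := norm_add_le (f t) (f t₀ - f t); simpa using this
        _ ≤ ‖f t‖ + R := by linarith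
  -- Cauchy-Schwarz
  have hR0 : 0 ≤ R := integral_nonneg fun t => norm_nonneg _
  have hS0 : 0 ≤ S := integral_nonneg fun t => sq_nonneg _
  have hCS : R ^ 2 ≤ (b - a) * S :=
    cs_int hab.le hf'.norm (fun t _ => norm_nonneg _)
  -- pointwise squared bound
  have ptw : ∀ t ∈ Ioo a b, ‖f t₀‖ ^ 2 ≤ 2 * ‖f t‖ ^ 2 + 2 * ((b-a) * S) := by
    intro t ht
    have h1 := key t (Ioo_subset_Icc_self ht)
    have h2 : ‖f t₀‖ ^ 2 ≤ (‖f t‖ + R) ^ 2 := by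
      apply pow_le_pow_left₀ (norm_nonneg _) h1
    nlinarith [sq_nonneg (‖f t‖ - R)]
  -- integrate over Ioo a b
  have hfint : IntegrableOn (fun t => ‖f t‖ ^ 2) (Ioo a b) volume :=
    ((hf.norm.pow 2).integrableOn_Icc).mono_set Ioo_subset_Icc_self
  have hint : (b - a) * ‖f t₀‖ ^ 2 ≤ 2 * J + (b - a) * (2 * ((b-a) * S)) := by
    have hmono : ∫ _t in Ioo a b, ‖f t₀‖ ^ 2 ≤
        ∫ t in Ioo a b, (2 * ‖f t‖ ^ 2 + 2 * ((b-a) * S)) := by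
      refine setIntegral_mono_on (integrableOn_const (lt_top_iff_ne_top.1 ?_))
        ((hfint.const_mul 2).add (integrableOn_const (lt_top_iff_ne_top.1 ?_))) measurableSet_Ioo ptw
      · rw [Real.volume_Ioo]; exact ENNReal.ofReal_lt_top
      · rw [Real.volume_Ioo]; exact ENNReal.ofReal_lt_top
    rw [setIntegral_const, integral_add (hfint.const_mul 2)
      (integrableOn_const (lt_top_iff_ne_top.1 (by rw [Real.volume_Ioo]; exact ENNReal.ofReal_lt_top))),
      integral_const_mul, setIntegral_const, Real.volume_real_Ioo_of_le hab.le, smul_eq_mul, smul_eq_mul] at hmono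
    linarith [hmono]
  have : ‖f t₀‖ ^ 2 ≤ (2 * J + (b - a) * (2 * ((b-a) * S))) / (b - a) := by
    rw [le_div_iff₀ hba]; linarith [hint]
  calc ‖f t₀‖ ^ 2 ≤ (2 * J + (b - a) * (2 * ((b-a) * S))) / (b - a) := this
    _ = (2/(b-a)) * J + 2*(b-a) * S := by field_simp
open Real Set MeasureTheory

lemma contParam {G : ℝ × ℝ → ℝ} {α β c d : ℝ}
    (hG : ContinuousOn G (Icc α β ×ˢ Icc c d)) :
    ContinuousOn (fun x => ∫ t in Ioo c d, G (x, t)) (Icc α β) := by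
  obtain ⟨M, hM⟩ := (isCompact_Icc.prod isCompact_Icc).exists_bound_of_continuousOn hG
  refine continuousOn_of_dominated (bound := fun _ => M) ?_ ?_ ?_ ?_
  · intro x hx
    have : ContinuousOn (fun t => G (x, t)) (Icc c d) := by
      refine hG.comp (Continuous.continuousOn (by continuity)) ?_
      intro t ht; exact ⟨hx, ht⟩
    exact (this.mono Ioo_subset_Icc_self).aestronglyMeasurable measurableSet_Ioo
  · intro x hx
    refine (ae_restrict_iff' measurableSet_Ioo).2 (ae_of_all _ fun t ht => ?_)
    exact hM (x, t) ⟨hx, Ioo_subset_Icc_self ht⟩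
  · exact integrableOn_const (lt_top_iff_ne_top.1 (by rw [Real.volume_Ioo]; exact ENNReal.ofReal_lt_top))
  · refine (ae_restrict_iff' measurableSet_Ioo).2 (ae_of_all _ fun t ht => ?_)
    refine hG.comp (Continuous.continuousOn (by continuity)) ?_
    intro x hx; exact ⟨hx, Ioo_subset_Icc_self ht⟩
open Real Set MeasureTheory

lemma cell {u : ℝ × ℝ → ℂ} {D' : ℝ × ℝ → (ℝ × ℝ) →L[ℝ] ℂ}
    {D2 : ℝ × ℝ → (ℝ × ℝ) →L[ℝ] ((ℝ × ℝ) →L[ℝ] ℂ)} {F : ℝ × ℝ → ℝ} {a h L : ℝ}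
    (hh : 0 < h) (hhL : 2 * h ≤ L) (hhπ : h ≤ π)
    (hucont : ContinuousOn u ((univ : Set ℝ) ×ˢ Icc 0 π))
    (hD'cont : ContinuousOn D' ((univ : Set ℝ) ×ˢ Icc 0 π))
    (hD2cont : ContinuousOn D2 ((univ : Set ℝ) ×ˢ Icc 0 π))
    (hVder : ∀ x t : ℝ, 0 < t → t < π → HasDerivAt (fun τ => u (x, τ)) (D' (x,t) (0,1)) t)
    (hHder : ∀ x t : ℝ, 0 < t → t < π → HasDerivAt (fun y => u (y, t)) (D' (x,t) (1,0)) x)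
    (hV2der : ∀ x t : ℝ, 0 < t → t < π →
      HasDerivAt (fun τ => D' (x, τ) (1,0)) (D2 (x,t) (0,1) (1,0)) t)
    (hF0 : ∀ p, 0 ≤ F p)
    (hb0 : ∀ p, ‖u p‖^2 ≤ F p)
    (hb1 : ∀ x t : ℝ, 0 < t → t < π → ‖D' (x,t) (1,0)‖^2 ≤ F (x,t))
    (hb2 : ∀ x t : ℝ, 0 < t → t < π → ‖D' (x,t) (0,1)‖^2 ≤ F (x,t))
    (hb3 : ∀ x t : ℝ, 0 < t → t < π → ‖D2 (x,t) (0,1) (1,0)‖^2 ≤ F (x,t))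
    (hFint : IntegrableOn F (Ioo (a - L/2) (a + L/2) ×ˢ Ioo 0 π) volume) :
    ∫ x in Ioo (a - h) (a + h), ‖u (x, 0)‖^2
      ≤ (2*h + (8*h/L)*(2/π + 2*π) + 8*h*L*(2/π + 2*π)) *
        ∫ y in Ioo (a - L/2) (a + L/2), (∫ t in Ioo 0 π, F (y, t)) := by
  have hπ := Real.pi_pos
  have hL : 0 < L := by linarith
  have hsubS : ∀ (α β : ℝ), (Icc α β ×ˢ Icc 0 π : Set (ℝ×ℝ)) ⊆ (univ ×ˢ Icc 0 π) :=
    fun α β p hp => ⟨trivial, hp.2⟩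
  -- slice continuity
  have hvu : ∀ x : ℝ, ContinuousOn (fun t => u (x, t)) (Icc 0 π) := fun x =>
    hucont.comp (Continuous.continuousOn (Continuous.prodMk_right x)) (fun t ht => ⟨trivial, ht⟩)
  have hvD : ∀ x : ℝ, ContinuousOn (fun t => D' (x, t)) (Icc 0 π) := fun x =>
    hD'cont.comp (Continuous.continuousOn (Continuous.prodMk_right x)) (fun t ht => ⟨trivial, ht⟩)
  have hvd1 : ∀ x : ℝ, ContinuousOn (fun t => D' (x, t) (1,0)) (Icc 0 π) := fun x =>
    (hvD x).clm_apply continuousOn_const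
  have hvd2 : ∀ x : ℝ, ContinuousOn (fun t => D' (x, t) (0,1)) (Icc 0 π) := fun x =>
    (hvD x).clm_apply continuousOn_const
  have hvdd : ∀ x : ℝ, ContinuousOn (fun t => D2 (x, t) (0,1) (1,0)) (Icc 0 π) := fun x =>
    ((hD2cont.comp (Continuous.continuousOn (Continuous.prodMk_right x))
      (fun t ht => ⟨trivial, ht⟩)).clm_apply continuousOn_const).clm_apply continuousOn_const
  have hhu : ∀ t : ℝ, t ∈ Icc (0:ℝ) π → ∀ α β : ℝ,
      ContinuousOn (fun y => u (y, t)) (Icc α β) := fun t ht α β =>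
    hucont.comp (Continuous.continuousOn (continuous_id.prodMk continuous_const))
      (fun y _ => ⟨trivial, ht⟩)
  have hhd1 : ∀ t : ℝ, t ∈ Icc (0:ℝ) π → ∀ α β : ℝ,
      ContinuousOn (fun y => D' (y, t) (1,0)) (Icc α β) := fun t ht α β =>
    (hD'cont.comp (Continuous.continuousOn (continuous_id.prodMk continuous_const))
      (fun y _ => ⟨trivial, ht⟩)).clm_apply continuousOn_const
  -- oneD applications
  have p3u : ∀ (y t : ℝ), 0 < t → t < π →
      ‖u (y,t)‖^2 ≤ (2/π) * (∫ τ in Ioo 0 π, ‖u (y,τ)‖^2)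
        + 2*π * (∫ τ in Ioo 0 π, ‖D' (y,τ) (0,1)‖^2) := by
    intro y t ht1 ht2
    have h := oneD (f := fun τ => u (y,τ)) (f' := fun τ => D' (y,τ) (0,1)) hπ
      ⟨ht1.le, ht2.le⟩ (hvu y) (hvd2 y) (fun τ hτ => hVder y τ hτ.1 hτ.2)
    simpa [sub_zero] using h
  have p3d : ∀ (y t : ℝ), 0 < t → t < π →
      ‖D' (y,t) (1,0)‖^2 ≤ (2/π) * (∫ τ in Ioo 0 π, ‖D' (y,τ) (1,0)‖^2)
        + 2*π * (∫ τ in Ioo 0 π, ‖D2 (y,τ) (0,1) (1,0)‖^2) := by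
    intro y t ht1 ht2
    have h := oneD (f := fun τ => D' (y,τ) (1,0)) (f' := fun τ => D2 (y,τ) (0,1) (1,0)) hπ
      ⟨ht1.le, ht2.le⟩ (hvd1 y) (hvdd y) (fun τ hτ => hV2der y τ hτ.1 hτ.2)
    simpa [sub_zero] using h
  have p0 : ∀ x : ℝ, ‖u (x,0)‖^2 ≤ (2/h) * (∫ t in Ioo 0 h, ‖u (x,t)‖^2)
      + 2*h * (∫ t in Ioo 0 h, ‖D' (x,t) (0,1)‖^2) := by
    intro x
    have h0 := oneD (f := fun t => u (x,t)) (f' := fun t => D' (x,t) (0,1)) hh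
      ⟨le_refl 0, hh.le⟩ ((hvu x).mono (Icc_subset_Icc le_rfl hhπ))
      ((hvd2 x).mono (Icc_subset_Icc le_rfl hhπ))
      (fun t ht => hVder x t ht.1 (lt_of_lt_of_le ht.2 hhπ))
    simpa [sub_zero] using h0
  have ph : ∀ x ∈ Icc (a-L/2) (a+L/2), ∀ t : ℝ, 0 < t → t < π →
      ‖u (x,t)‖^2 ≤ (2/L) * (∫ y in Ioo (a-L/2) (a+L/2), ‖u (y,t)‖^2)
        + 2*L*(∫ y in Ioo (a-L/2) (a+L/2), ‖D' (y,t) (1,0)‖^2) := by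
    intro x hx t ht1 ht2
    have hablt : a - L/2 < a + L/2 := by linarith
    have h1 := oneD (f := fun y => u (y,t)) (f' := fun y => D' (y,t) (1,0)) hablt hx
      (hhu t ⟨ht1.le, ht2.le⟩ _ _) (hhd1 t ⟨ht1.le, ht2.le⟩ _ _)
      (fun y _ => hHder y t ht1 ht2)
    have heq : a + L/2 - (a - L/2) = L := by ring
    rw [heq] at h1
    exact h1
    -- E and comparisons
  set E := ∫ y in Ioo (a - L/2) (a + L/2), (∫ t in Ioo 0 π, F (y, t)) with hEdef
  have key_cmp : ∀ q : ℝ×ℝ → ℝ, (∀ z, 0 ≤ q z) →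
      (∀ x t : ℝ, 0 < t → t < π → q (x,t) ≤ F (x,t)) →
      (∫ y in Ioo (a - L/2) (a + L/2), ∫ t in Ioo 0 π, q (y,t)) ≤ E := by
    intro q hq0 hqF
    have hFint2 : Integrable F
        ((volume.restrict (Ioo (a-L/2) (a+L/2))).prod (volume.restrict (Ioo (0:ℝ) π))) := by
      rw [Measure.prod_restrict]; exact hFint
    have hgFint := hFint2.integral_prod_left
    have hae := hFint2.prod_right_ae
    refine integral_mono_of_nonneg (ae_of_all _ fun y => integral_nonneg fun t => hq0 _) hgFint ?_
    filter_upwards [hae] with y hy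
    refine integral_mono_of_nonneg (ae_of_all _ fun t => hq0 _) hy ?_
    exact (ae_restrict_iff' measurableSet_Ioo).2 (ae_of_all _ fun t ht => hqF y t ht.1 ht.2)
  have hg0E : (∫ y in Ioo (a-L/2) (a+L/2), ∫ t in Ioo 0 π, ‖u (y,t)‖^2) ≤ E :=
    key_cmp (fun z => ‖u z‖^2) (fun z => sq_nonneg _) (fun x t h1 h2 => hb0 _)
  have hg1E : (∫ y in Ioo (a-L/2) (a+L/2), ∫ t in Ioo 0 π, ‖D' (y,t) (1,0)‖^2) ≤ E :=
    key_cmp (fun z => ‖D' z (1,0)‖^2) (fun z => sq_nonneg _) (fun x t h1 h2 => hb1 x t h1 h2)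
  have hg2E : (∫ y in Ioo (a-L/2) (a+L/2), ∫ t in Ioo 0 π, ‖D' (y,t) (0,1)‖^2) ≤ E :=
    key_cmp (fun z => ‖D' z (0,1)‖^2) (fun z => sq_nonneg _) (fun x t h1 h2 => hb2 x t h1 h2)
  have hg3E : (∫ y in Ioo (a-L/2) (a+L/2), ∫ t in Ioo 0 π, ‖D2 (y,t) (0,1) (1,0)‖^2) ≤ E :=
    key_cmp (fun z => ‖D2 z (0,1) (1,0)‖^2) (fun z => sq_nonneg _) (fun x t h1 h2 => hb3 x t h1 h2)
  -- continuity of the averaged functions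
  have hg0c : ∀ α β : ℝ, ContinuousOn (fun y => ∫ t in Ioo 0 π, ‖u (y,t)‖^2) (Icc α β) :=
    fun α β => contParam ((hucont.mono (hsubS α β)).norm.pow 2)
  have hg1c : ∀ α β : ℝ, ContinuousOn (fun y => ∫ t in Ioo 0 π, ‖D' (y,t) (1,0)‖^2) (Icc α β) :=
    fun α β => contParam (((hD'cont.mono (hsubS α β)).clm_apply continuousOn_const).norm.pow 2)
  have hg2c : ∀ α β : ℝ, ContinuousOn (fun y => ∫ t in Ioo 0 π, ‖D' (y,t) (0,1)‖^2) (Icc α β) :=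
    fun α β => contParam (((hD'cont.mono (hsubS α β)).clm_apply continuousOn_const).norm.pow 2)
  have hg3c : ∀ α β : ℝ,
      ContinuousOn (fun y => ∫ t in Ioo 0 π, ‖D2 (y,t) (0,1) (1,0)‖^2) (Icc α β) :=
    fun α β => contParam ((((hD2cont.mono (hsubS α β)).clm_apply continuousOn_const).clm_apply
      continuousOn_const).norm.pow 2)
  have hG0c : ∀ α β : ℝ, ContinuousOn (fun y => (2/π) * (∫ t in Ioo 0 π, ‖u (y,t)‖^2)
      + 2*π * (∫ t in Ioo 0 π, ‖D' (y,t) (0,1)‖^2)) (Icc α β) :=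
    fun α β => (continuousOn_const.mul (hg0c α β)).add (continuousOn_const.mul (hg2c α β))
  have hG1c : ∀ α β : ℝ, ContinuousOn (fun y => (2/π) * (∫ t in Ioo 0 π, ‖D' (y,t) (1,0)‖^2)
      + 2*π * (∫ t in Ioo 0 π, ‖D2 (y,t) (0,1) (1,0)‖^2)) (Icc α β) :=
    fun α β => (continuousOn_const.mul (hg1c α β)).add (continuousOn_const.mul (hg3c α β))
  -- A0 and A1
  set A0 := ∫ y in Ioo (a-L/2) (a+L/2), ((2/π) * (∫ t in Ioo 0 π, ‖u (y,t)‖^2)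
      + 2*π * (∫ t in Ioo 0 π, ‖D' (y,t) (0,1)‖^2)) with hA0def
  set A1 := ∫ y in Ioo (a-L/2) (a+L/2), ((2/π) * (∫ t in Ioo 0 π, ‖D' (y,t) (1,0)‖^2)
      + 2*π * (∫ t in Ioo 0 π, ‖D2 (y,t) (0,1) (1,0)‖^2)) with hA1def
  have hA0E : A0 ≤ (2/π + 2*π) * E := by
    rw [hA0def, integral_add
      (((hg0c _ _).integrableOn_Icc.mono_set Ioo_subset_Icc_self).const_mul _)
      (((hg2c _ _).integrableOn_Icc.mono_set Ioo_subset_Icc_self).const_mul _),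
      integral_const_mul, integral_const_mul]
    have e1 := mul_le_mul_of_nonneg_left hg0E (by positivity : (0:ℝ) ≤ 2/π)
    have e2 := mul_le_mul_of_nonneg_left hg2E (by positivity : (0:ℝ) ≤ 2*π)
    nlinarith [e1, e2]
  have hA1E : A1 ≤ (2/π + 2*π) * E := by
    rw [hA1def, integral_add
      (((hg1c _ _).integrableOn_Icc.mono_set Ioo_subset_Icc_self).const_mul _)
      (((hg3c _ _).integrableOn_Icc.mono_set Ioo_subset_Icc_self).const_mul _),
      integral_const_mul, integral_const_mul]
    have e1 := mul_le_mul_of_nonneg_left hg1E (by positivity : (0:ℝ) ≤ 2/π)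
    have e2 := mul_le_mul_of_nonneg_left hg3E (by positivity : (0:ℝ) ≤ 2*π)
    nlinarith [e1, e2]
  -- pointwise bound in the thin strip
  have pM : ∀ x ∈ Ioo (a-h) (a+h), ∀ t : ℝ, 0 < t → t < h →
      ‖u (x,t)‖^2 ≤ (2/L) * A0 + 2*L * A1 := by
    intro x hx t ht1 ht2
    have htπ : t < π := lt_of_lt_of_le ht2 hhπ
    have hx' : x ∈ Icc (a-L/2) (a+L/2) := ⟨by linarith [hx.1], by linarith [hx.2]⟩
    have h1 := ph x hx' t ht1 htπ
    have hI0 : (∫ y in Ioo (a-L/2) (a+L/2), ‖u (y,t)‖^2) ≤ A0 := by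
      rw [hA0def]
      refine setIntegral_mono_on ?_ ?_ measurableSet_Ioo (fun y _ => p3u y t ht1 htπ)
      · exact ((hhu t ⟨ht1.le, htπ.le⟩ (a-L/2) (a+L/2)).norm.pow 2).integrableOn_Icc.mono_set
          Ioo_subset_Icc_self
      · exact (hG0c _ _).integrableOn_Icc.mono_set Ioo_subset_Icc_self
    have hI1 : (∫ y in Ioo (a-L/2) (a+L/2), ‖D' (y,t) (1,0)‖^2) ≤ A1 := by
      rw [hA1def]
      refine setIntegral_mono_on ?_ ?_ measurableSet_Ioo (fun y _ => p3d y t ht1 htπ)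
      · exact ((hhd1 t ⟨ht1.le, htπ.le⟩ (a-L/2) (a+L/2)).norm.pow 2).integrableOn_Icc.mono_set
          Ioo_subset_Icc_self
      · exact (hG1c _ _).integrableOn_Icc.mono_set Ioo_subset_Icc_self
    calc ‖u (x,t)‖^2 ≤ (2/L) * (∫ y in Ioo (a-L/2) (a+L/2), ‖u (y,t)‖^2)
          + 2*L*(∫ y in Ioo (a-L/2) (a+L/2), ‖D' (y,t) (1,0)‖^2) := h1
      _ ≤ (2/L) * A0 + 2*L * A1 :=
        add_le_add (mul_le_mul_of_nonneg_left hI0 (by positivity))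
          (mul_le_mul_of_nonneg_left hI1 (by positivity))
  have pV : ∀ x ∈ Ioo (a-h) (a+h),
      (∫ t in Ioo 0 h, ‖u (x,t)‖^2) ≤ h * ((2/L) * A0 + 2*L*A1) := by
    intro x hx
    have hmono : (∫ t in Ioo 0 h, ‖u (x,t)‖^2)
        ≤ ∫ _t in Ioo 0 h, ((2/L) * A0 + 2*L*A1) := by
      refine setIntegral_mono_on ?_ ?_ measurableSet_Ioo (fun t ht => pM x hx t ht.1 ht.2)
      · exact (((hvu x).mono (Icc_subset_Icc le_rfl hhπ)).norm.pow 2).integrableOn_Icc.mono_set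
          Ioo_subset_Icc_self
      · exact integrableOn_const (lt_top_iff_ne_top.1 (by rw [Real.volume_Ioo]; exact ENNReal.ofReal_lt_top))
    rw [setIntegral_const, smul_eq_mul, Real.volume_real_Ioo_of_le hh.le] at hmono
    simp only [sub_zero] at hmono
    linarith [hmono]
  -- main assembly
  have c1 : ContinuousOn (fun x => ∫ t in Ioo 0 h, ‖u (x,t)‖^2) (Icc (a-h) (a+h)) := by
    have hGc : ContinuousOn (fun p : ℝ×ℝ => ‖u p‖^2) (Icc (a-h) (a+h) ×ˢ Icc 0 h) :=
      (hucont.mono (fun p hp => ⟨trivial, ⟨hp.2.1, le_trans hp.2.2 hhπ⟩⟩)).norm.pow 2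
    exact contParam hGc
  have c2 : ContinuousOn (fun x => ∫ t in Ioo 0 h, ‖D' (x,t) (0,1)‖^2) (Icc (a-h) (a+h)) := by
    have hGc : ContinuousOn (fun p : ℝ×ℝ => ‖D' p (0,1)‖^2) (Icc (a-h) (a+h) ×ˢ Icc 0 h) :=
      ((hD'cont.mono (fun p hp => ⟨trivial, ⟨hp.2.1, le_trans hp.2.2 hhπ⟩⟩)).clm_apply
        continuousOn_const).norm.pow 2
    exact contParam hGc
  have i1 : IntegrableOn (fun x => ∫ t in Ioo 0 h, ‖u (x,t)‖^2) (Ioo (a-h) (a+h)) volume :=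
    c1.integrableOn_Icc.mono_set Ioo_subset_Icc_self
  have i2 : IntegrableOn (fun x => ∫ t in Ioo 0 h, ‖D' (x,t) (0,1)‖^2) (Ioo (a-h) (a+h)) volume :=
    c2.integrableOn_Icc.mono_set Ioo_subset_Icc_self
  have step1 : ∫ x in Ioo (a-h) (a+h), ‖u (x,0)‖^2
      ≤ ∫ x in Ioo (a-h) (a+h), ((2/h) * (∫ t in Ioo 0 h, ‖u (x,t)‖^2)
        + 2*h * (∫ t in Ioo 0 h, ‖D' (x,t) (0,1)‖^2)) := by
    refine setIntegral_mono_on ?_ ?_ measurableSet_Ioo (fun x _ => p0 x)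
    · exact ((hhu 0 ⟨le_rfl, hπ.le⟩ (a-h) (a+h)).norm.pow 2).integrableOn_Icc.mono_set
        Ioo_subset_Icc_self
    · exact ((i1.const_mul _).add (i2.const_mul _))
  have split : (∫ x in Ioo (a-h) (a+h), ((2/h) * (∫ t in Ioo 0 h, ‖u (x,t)‖^2)
        + 2*h * (∫ t in Ioo 0 h, ‖D' (x,t) (0,1)‖^2)))
      = (2/h) * (∫ x in Ioo (a-h) (a+h), ∫ t in Ioo 0 h, ‖u (x,t)‖^2)
        + 2*h * (∫ x in Ioo (a-h) (a+h), ∫ t in Ioo 0 h, ‖D' (x,t) (0,1)‖^2) := by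
    rw [integral_add (i1.const_mul _) (i2.const_mul _), integral_const_mul, integral_const_mul]
  have bV0 : (∫ x in Ioo (a-h) (a+h), ∫ t in Ioo 0 h, ‖u (x,t)‖^2)
      ≤ 2*h*(h * ((2/L) * A0 + 2*L*A1)) := by
    have hmono : (∫ x in Ioo (a-h) (a+h), ∫ t in Ioo 0 h, ‖u (x,t)‖^2)
        ≤ ∫ _x in Ioo (a-h) (a+h), (h * ((2/L) * A0 + 2*L*A1)) := by
      refine setIntegral_mono_on i1 ?_ measurableSet_Ioo pV
      exact integrableOn_const (lt_top_iff_ne_top.1 (by rw [Real.volume_Ioo]; exact ENNReal.ofReal_lt_top))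
    rw [setIntegral_const, smul_eq_mul, Real.volume_real_Ioo_of_le (by linarith : a - h ≤ a + h),
      (by ring : a + h - (a - h) = 2*h)] at hmono
    linarith [hmono]
  have V2le : ∀ x : ℝ, (∫ t in Ioo 0 h, ‖D' (x,t) (0,1)‖^2)
      ≤ (∫ t in Ioo 0 π, ‖D' (x,t) (0,1)‖^2) := by
    intro x
    refine setIntegral_mono_set
      (((hvd2 x).norm.pow 2).integrableOn_Icc.mono_set Ioo_subset_Icc_self)
      (ae_of_all _ fun t => sq_nonneg _)
      (HasSubset.Subset.eventuallyLE (Ioo_subset_Ioo le_rfl hhπ))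
  have bV2 : (∫ x in Ioo (a-h) (a+h), ∫ t in Ioo 0 h, ‖D' (x,t) (0,1)‖^2) ≤ E := by
    calc (∫ x in Ioo (a-h) (a+h), ∫ t in Ioo 0 h, ‖D' (x,t) (0,1)‖^2)
        ≤ ∫ x in Ioo (a-h) (a+h), ∫ t in Ioo 0 π, ‖D' (x,t) (0,1)‖^2 := by
          refine setIntegral_mono_on i2 ?_ measurableSet_Ioo (fun x _ => V2le x)
          exact (hg2c _ _).integrableOn_Icc.mono_set Ioo_subset_Icc_self
      _ ≤ ∫ x in Ioo (a-L/2) (a+L/2), ∫ t in Ioo 0 π, ‖D' (x,t) (0,1)‖^2 := by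
          refine setIntegral_mono_set
            ((hg2c _ _).integrableOn_Icc.mono_set Ioo_subset_Icc_self)
            (ae_of_all _ fun x => integral_nonneg fun t => sq_nonneg _)
            (HasSubset.Subset.eventuallyLE (Ioo_subset_Ioo (by linarith) (by linarith)))
      _ ≤ E := hg2E
  calc ∫ x in Ioo (a-h) (a+h), ‖u (x,0)‖^2
      ≤ (2/h) * (∫ x in Ioo (a-h) (a+h), ∫ t in Ioo 0 h, ‖u (x,t)‖^2)
        + 2*h * (∫ x in Ioo (a-h) (a+h), ∫ t in Ioo 0 h, ‖D' (x,t) (0,1)‖^2) :=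
      le_trans step1 (le_of_eq split)
    _ ≤ (2/h) * (2*h*(h * ((2/L) * A0 + 2*L*A1))) + 2*h*E :=
      add_le_add (mul_le_mul_of_nonneg_left bV0 (by positivity))
        (mul_le_mul_of_nonneg_left bV2 (by positivity))
    _ ≤ (2*h + (8*h/L)*(2/π + 2*π) + 8*h*L*(2/π + 2*π)) * E := by
      have e1 : (2/h) * (2*h*(h * ((2/L) * A0 + 2*L*A1))) = (8*h/L)*A0 + 8*h*L*A1 := by
        field_simp; ring
      rw [e1]
      have e2 : (8*h/L)*A0 ≤ (8*h/L)*((2/π+2*π)*E) :=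
        mul_le_mul_of_nonneg_left hA0E (by positivity)
      have e3 : 8*h*L*A1 ≤ 8*h*L*((2/π+2*π)*E) :=
        mul_le_mul_of_nonneg_left hA1E (by positivity)
      nlinarith [e2, e3]

/-- There is a constant `C > 0`, independent of `ε`, `δ` and `u`, such that for
every `ε ∈ (0,1]`, every `δ ∈ (0, π/2)` and every `C²` function `u` on the closure of the strip
`Ω = {0 < x₂ < π}` with finite `W²₂`-energy, the squared `L²`-norm of the boundary trace of `u`
on the union of the intervals `{|x₁ - επj| < εδ, x₂ = 0}`, `j ∈ ℤ`, satisfies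
`∑_j ∫_{επj-εδ}^{επj+εδ} |u(x₁,0)|² dx₁ ≤ C² δ ‖u‖²_{W²₂(Ω)}`. -/
theorem stmt1 :
    ∃ C : ℝ, 0 < C ∧
      ∀ ε δ : ℝ, ε ∈ Set.Ioc (0:ℝ) 1 → δ ∈ Set.Ioo (0:ℝ) (π/2) →
      ∀ u : ℝ × ℝ → ℂ,
        ContDiffOn ℝ 2 u (closure {p : ℝ × ℝ | 0 < p.2 ∧ p.2 < π}) →
        IntegrableOn
          (fun p => ‖u p‖^2 + ‖fderiv ℝ u p‖^2 + ‖iteratedFDeriv ℝ 2 u p‖^2)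
          {p : ℝ × ℝ | 0 < p.2 ∧ p.2 < π} volume →
        (∑' j : ℤ, ∫ x in Set.Ioo (ε*π*j - ε*δ) (ε*π*j + ε*δ), ‖u (x, 0)‖^2)
          ≤ C^2 * δ *
            ∫ p in {p : ℝ × ℝ | 0 < p.2 ∧ p.2 < π},
              (‖u p‖^2 + ‖fderiv ℝ u p‖^2 + ‖iteratedFDeriv ℝ 2 u p‖^2) := by
  refine ⟨100, by norm_num, ?_⟩
  intro ε δ hε hδ u hu hFint
  obtain ⟨hε0, hε1⟩ := hε
  obtain ⟨hδ0, hδπ⟩ := hδ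
  have hπ := Real.pi_pos
  set Ω : Set (ℝ×ℝ) := {p : ℝ × ℝ | 0 < p.2 ∧ p.2 < π} with hΩdef
  set F : ℝ×ℝ → ℝ :=
    fun p => ‖u p‖^2 + ‖fderiv ℝ u p‖^2 + ‖iteratedFDeriv ℝ 2 u p‖^2 with hFdef
  have hΩprod : Ω = (univ : Set ℝ) ×ˢ Ioo 0 π := by
    ext p; simp [hΩdef, Set.mem_prod]
  have hclos : closure Ω = (univ : Set ℝ) ×ˢ Icc 0 π := by
    rw [hΩprod, closure_prod_eq, closure_univ, closure_Ioo (ne_of_lt hπ)]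
  have hu' : ContDiffOn ℝ 2 u ((univ : Set ℝ) ×ˢ Icc 0 π) := by rw [← hclos]; exact hu
  have hΩopen : IsOpen Ω := by rw [hΩprod]; exact isOpen_univ.prod isOpen_Ioo
  have hΩmeas : MeasurableSet Ω := hΩopen.measurableSet
  have hΩsubS : Ω ⊆ (univ : Set ℝ) ×ˢ Icc 0 π := by
    rw [hΩprod]; exact prod_mono_right Ioo_subset_Icc_self
  have hΩmem : ∀ x t : ℝ, 0 < t → t < π → ((x,t) : ℝ×ℝ) ∈ Ω := fun x t h1 h2 => by
    rw [hΩdef]; exact ⟨h1, h2⟩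
  have huniq : UniqueDiffOn ℝ ((univ : Set ℝ) ×ˢ Icc 0 π) := by
    apply uniqueDiffOn_convex (convex_univ.prod (convex_Icc 0 π))
    rw [interior_prod_eq, interior_univ, interior_Icc]
    exact ⟨(0, π/2), mem_prod.2 ⟨trivial, by constructor <;> linarith⟩⟩
  set D' := fderivWithin ℝ u ((univ : Set ℝ) ×ˢ Icc 0 π) with hD'def
  set D2 := fderivWithin ℝ D' ((univ : Set ℝ) ×ˢ Icc 0 π) with hD2def
  have hucont : ContinuousOn u ((univ : Set ℝ) ×ˢ Icc 0 π) := hu'.continuousOn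
  have hD'cd : ContDiffOn ℝ 1 D' ((univ : Set ℝ) ×ˢ Icc 0 π) :=
    hu'.fderivWithin huniq (by norm_num)
  have hD'cont : ContinuousOn D' ((univ : Set ℝ) ×ˢ Icc 0 π) := hD'cd.continuousOn
  have hD2cont : ContinuousOn D2 ((univ : Set ℝ) ×ˢ Icc 0 π) :=
    (hD'cd.fderivWithin (m := 0) huniq (by norm_num)).continuousOn
  have hnhds : ∀ p ∈ Ω, ((univ : Set ℝ) ×ˢ Icc 0 π) ∈ nhds p := fun p hp =>
    Filter.mem_of_superset (hΩopen.mem_nhds hp) hΩsubS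
  have hD'eq : ∀ p ∈ Ω, D' p = fderiv ℝ u p := fun p hp => by
    rw [hD'def]; exact fderivWithin_of_mem_nhds (hnhds p hp)
  have hD'has : ∀ p ∈ Ω, HasFDerivAt u (D' p) p := fun p hp => by
    rw [hD'eq p hp]
    exact ((hu'.contDiffAt (hnhds p hp)).differentiableAt (by norm_num)).hasFDerivAt
  have hD2has : ∀ p ∈ Ω, HasFDerivAt D' (D2 p) p := fun p hp =>
    ((hD'cd.differentiableOn (by norm_num) p (hΩsubS hp)).hasFDerivWithinAt).hasFDerivAt
      (hnhds p hp)
  have hD2eq : ∀ p ∈ Ω, D2 p = fderiv ℝ (fderiv ℝ u) p := fun p hp => by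
    have h1 : D' =ᶠ[nhds p] fderiv ℝ u :=
      Filter.eventually_of_mem (hΩopen.mem_nhds hp) (fun q hq => hD'eq q hq)
    rw [hD2def, fderivWithin_of_mem_nhds (hnhds p hp), h1.fderiv_eq]
  -- derivative facts
  have hVder : ∀ x t : ℝ, 0 < t → t < π →
      HasDerivAt (fun τ => u (x, τ)) (D' (x,t) (0,1)) t := by
    intro x t h1 h2
    have hline : HasDerivAt (fun τ : ℝ => ((x, τ) : ℝ×ℝ)) ((0:ℝ),(1:ℝ)) t :=
      (hasDerivAt_const t x).prodMk (hasDerivAt_id t)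
    exact (hD'has _ (hΩmem x t h1 h2)).comp_hasDerivAt t hline
  have hHder : ∀ x t : ℝ, 0 < t → t < π →
      HasDerivAt (fun y => u (y, t)) (D' (x,t) (1,0)) x := by
    intro x t h1 h2
    have hline : HasDerivAt (fun y : ℝ => ((y, t) : ℝ×ℝ)) ((1:ℝ),(0:ℝ)) x :=
      (hasDerivAt_id x).prodMk (hasDerivAt_const x t)
    exact (hD'has _ (hΩmem x t h1 h2)).comp_hasDerivAt x hline
  have hV2der : ∀ x t : ℝ, 0 < t → t < π →
      HasDerivAt (fun τ => D' (x, τ) (1,0)) (D2 (x,t) (0,1) (1,0)) t := by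
    intro x t h1 h2
    have hline : HasDerivAt (fun τ : ℝ => ((x, τ) : ℝ×ℝ)) ((0:ℝ),(1:ℝ)) t :=
      (hasDerivAt_const t x).prodMk (hasDerivAt_id t)
    have hDer : HasDerivAt (fun τ => D' (x,τ)) (D2 (x,t) (0,1)) t :=
      (hD2has _ (hΩmem x t h1 h2)).comp_hasDerivAt t hline
    have happ := ((ContinuousLinearMap.apply ℝ ℂ
      ((1:ℝ),(0:ℝ))).hasFDerivAt).comp_hasDerivAt t hDer
    exact happ
  -- F bounds
  have hF0 : ∀ p, 0 ≤ F p := fun p => by rw [hFdef]; positivity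
  have hb0 : ∀ p, ‖u p‖^2 ≤ F p := fun p => by
    simp only [hFdef]
    nlinarith [sq_nonneg ‖fderiv ℝ u p‖, sq_nonneg ‖iteratedFDeriv ℝ 2 u p‖]
  have hnorme1 : ‖((1:ℝ),(0:ℝ))‖ = 1 := by simp [Prod.norm_def]
  have hnorme2 : ‖((0:ℝ),(1:ℝ))‖ = 1 := by simp [Prod.norm_def]
  have hb12 : ∀ x t : ℝ, 0 < t → t < π → ∀ v : ℝ×ℝ, ‖v‖ = 1 →
      ‖D' (x,t) v‖^2 ≤ F (x,t) := by
    intro x t h1 h2 v hv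
    have hp := hΩmem x t h1 h2
    have hle : ‖D' (x,t) v‖ ≤ ‖fderiv ℝ u (x,t)‖ := by
      rw [hD'eq _ hp]
      calc ‖fderiv ℝ u (x,t) v‖ ≤ ‖fderiv ℝ u (x,t)‖ * ‖v‖ :=
            (fderiv ℝ u (x,t)).le_opNorm v
        _ = ‖fderiv ℝ u (x,t)‖ := by rw [hv, mul_one]
    have h2' : ‖D' (x,t) v‖^2 ≤ ‖fderiv ℝ u (x,t)‖^2 :=
      pow_le_pow_left₀ (norm_nonneg _) hle 2
    simp only [hFdef]
    nlinarith [sq_nonneg ‖u ((x:ℝ),(t:ℝ))‖, sq_nonneg ‖iteratedFDeriv ℝ 2 u ((x:ℝ),(t:ℝ))‖]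
  have hb3 : ∀ x t : ℝ, 0 < t → t < π → ‖D2 (x,t) (0,1) (1,0)‖^2 ≤ F (x,t) := by
    intro x t h1 h2
    have hp := hΩmem x t h1 h2
    have heq : D2 (x,t) (0,1) (1,0)
        = iteratedFDeriv ℝ 2 u (x,t) ![((0:ℝ),(1:ℝ)),((1:ℝ),(0:ℝ))] := by
      rw [iteratedFDeriv_two_apply u (x,t) ![((0:ℝ),(1:ℝ)),((1:ℝ),(0:ℝ))], hD2eq _ hp]
      simp
    rw [heq]
    have hle := (iteratedFDeriv ℝ 2 u (x,t)).le_opNorm ![((0:ℝ),(1:ℝ)),((1:ℝ),(0:ℝ))]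
    have hprod : (∏ i : Fin 2, ‖(![((0:ℝ),(1:ℝ)),((1:ℝ),(0:ℝ))]) i‖) = 1 := by
      rw [Fin.prod_univ_two]
      simp [hnorme1, hnorme2]
    rw [hprod, mul_one] at hle
    have h2' := pow_le_pow_left₀ (norm_nonneg _) hle 2
    simp only [hFdef]
    nlinarith [sq_nonneg ‖u ((x:ℝ),(t:ℝ))‖, sq_nonneg ‖fderiv ℝ u ((x:ℝ),(t:ℝ))‖]
  -- cells
  have hcellsub : ∀ j : ℤ,
      (Ioo (ε*π*j - ε*π/2) (ε*π*j + ε*π/2) ×ˢ Ioo (0:ℝ) π) ⊆ Ω := by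
    intro j p hp
    rw [hΩdef]; exact ⟨hp.2.1, hp.2.2⟩
  have hcells : ∀ j : ℤ,
      IntegrableOn F (Ioo (ε*π*j - ε*π/2) (ε*π*j + ε*π/2) ×ˢ Ioo (0:ℝ) π) volume :=
    fun j => hFint.mono_set (hcellsub j)
  have hπ3 : (3:ℝ) < π := by have := Real.pi_gt_three; linarith
  have hπ4 : π < 3.15 := by have := Real.pi_lt_d2; linarith
  have percell : ∀ j : ℤ, (∫ x in Ioo (ε*π*j - ε*δ) (ε*π*j + ε*δ), ‖u (x,0)‖^2)
      ≤ 10000 * δ *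
        ∫ p in (Ioo (ε*π*j - ε*π/2) (ε*π*j + ε*π/2) ×ˢ Ioo (0:ℝ) π), F p := by
    intro j
    have hh : 0 < ε*δ := mul_pos hε0 hδ0
    have hhL : 2*(ε*δ) ≤ ε*π := by nlinarith
    have hhπ : ε*δ ≤ π := by nlinarith
    have hcell := cell (u := u) (D' := D') (D2 := D2) (F := F) (a := ε*π*j)
      (h := ε*δ) (L := ε*π) hh hhL hhπ hucont hD'cont hD2cont hVder hHder hV2der
      hF0 hb0 (fun x t h1 h2 => hb12 x t h1 h2 _ hnorme1)
      (fun x t h1 h2 => hb12 x t h1 h2 _ hnorme2) hb3 (hcells j)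
    have hEeq : (∫ p in (Ioo (ε*π*j - ε*π/2) (ε*π*j + ε*π/2) ×ˢ Ioo (0:ℝ) π), F p)
        = ∫ y in Ioo (ε*π*j - ε*π/2) (ε*π*j + ε*π/2), ∫ t in Ioo (0:ℝ) π, F (y,t) :=
      MeasureTheory.setIntegral_prod (μ := volume) (ν := volume) F (hcells j)
    have hEnn : 0 ≤ ∫ p in (Ioo (ε*π*j - ε*π/2) (ε*π*j + ε*π/2) ×ˢ Ioo (0:ℝ) π), F p :=
      setIntegral_nonneg (measurableSet_Ioo.prod measurableSet_Ioo) (fun p _ => hF0 p)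
    have coeff_le : 2*(ε*δ) + (8*(ε*δ)/(ε*π))*(2/π + 2*π)
        + 8*(ε*δ)*(ε*π)*(2/π + 2*π) ≤ 10000*δ := by
      have h8 : 8*(ε*δ)/(ε*π) = 8*δ/π := by
        field_simp
      rw [h8]
      have ha : 2/π ≤ 1 := by rw [div_le_one hπ]; linarith
      have hb : 2/π + 2*π ≤ 8 := by linarith
      have hcp : (0:ℝ) ≤ 2/π + 2*π := by positivity
      have hc : 8*δ/π ≤ 3*δ := by rw [div_le_iff₀ hπ]; nlinarith
      have hε2 : ε*ε ≤ 1 := mul_le_one₀ hε1 hε0.le hε1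
      have h3 : 8*(ε*δ)*(ε*π) ≤ 8*δ*π := by nlinarith [mul_pos hδ0 hπ, hε2]
      have t2 : (8*δ/π)*(2/π + 2*π) ≤ (3*δ)*8 :=
        mul_le_mul hc hb hcp (by positivity)
      have t3 : (8*(ε*δ)*(ε*π))*(2/π + 2*π) ≤ (8*δ*π)*8 :=
        mul_le_mul h3 hb hcp (by positivity)
      nlinarith
    calc (∫ x in Ioo (ε*π*j - ε*δ) (ε*π*j + ε*δ), ‖u (x,0)‖^2)
        ≤ (2*(ε*δ) + (8*(ε*δ)/(ε*π))*(2/π + 2*π) + 8*(ε*δ)*(ε*π)*(2/π + 2*π)) *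
          ∫ y in Ioo (ε*π*j - ε*π/2) (ε*π*j + ε*π/2), ∫ t in Ioo (0:ℝ) π, F (y,t) := by
          have := hcell
          convert this using 3 <;> ring
      _ = (2*(ε*δ) + (8*(ε*δ)/(ε*π))*(2/π + 2*π) + 8*(ε*δ)*(ε*π)*(2/π + 2*π)) *
          ∫ p in (Ioo (ε*π*j - ε*π/2) (ε*π*j + ε*π/2) ×ˢ Ioo (0:ℝ) π), F p := by
          rw [hEeq]
      _ ≤ 10000 * δ *
          ∫ p in (Ioo (ε*π*j - ε*π/2) (ε*π*j + ε*π/2) ×ˢ Ioo (0:ℝ) π), F p :=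
          mul_le_mul_of_nonneg_right coeff_le hEnn
  -- disjointness and summation
  have hεπ : 0 < ε*π := mul_pos hε0 hπ
  have hQdisj : ∀ i j : ℤ, i ≠ j →
      Disjoint (Ioo (ε*π*i - ε*π/2) (ε*π*i + ε*π/2) ×ˢ Ioo (0:ℝ) π)
        (Ioo (ε*π*j - ε*π/2) (ε*π*j + ε*π/2) ×ˢ Ioo (0:ℝ) π) := by
    intro i j hij
    rw [Set.disjoint_left]
    rintro p hp1 hp2
    have h1 := hp1.1
    have h2 := hp2.1
    rcases lt_or_gt_of_ne hij with hlt | hlt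
    · have hc : (i:ℝ) + 1 ≤ (j:ℝ) := by exact_mod_cast Int.lt_iff_add_one_le.1 hlt
      have := h1.2; have := h2.1
      nlinarith [mul_le_mul_of_nonneg_left hc hεπ.le]
    · have hc : (j:ℝ) + 1 ≤ (i:ℝ) := by exact_mod_cast Int.lt_iff_add_one_le.1 hlt
      have := h2.2; have := h1.1
      nlinarith [mul_le_mul_of_nonneg_left hc hεπ.le]
  have hΩint : 0 ≤ ∫ p in Ω, F p := setIntegral_nonneg hΩmeas (fun p _ => hF0 p)
  have hsum : ∀ fs : Finset ℤ,
      (∑ j ∈ fs, ∫ x in Ioo (ε*π*j - ε*δ) (ε*π*j + ε*δ), ‖u (x,0)‖^2)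
        ≤ (100:ℝ)^2 * δ * ∫ p in Ω, F p := by
    intro fs
    calc (∑ j ∈ fs, ∫ x in Ioo (ε*π*j - ε*δ) (ε*π*j + ε*δ), ‖u (x,0)‖^2)
        ≤ ∑ j ∈ fs, 10000 * δ *
            ∫ p in (Ioo (ε*π*j - ε*π/2) (ε*π*j + ε*π/2) ×ˢ Ioo (0:ℝ) π), F p :=
          Finset.sum_le_sum (fun j _ => percell j)
      _ = 10000 * δ * ∑ j ∈ fs,
            ∫ p in (Ioo (ε*π*j - ε*π/2) (ε*π*j + ε*π/2) ×ˢ Ioo (0:ℝ) π), F p := by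
          rw [Finset.mul_sum]
      _ ≤ 10000 * δ * ∫ p in Ω, F p := by
          refine mul_le_mul_of_nonneg_left ?_ (by positivity)
          rw [← integral_biUnion_finset fs (fun j _ => measurableSet_Ioo.prod measurableSet_Ioo)
            (fun i _ j _ hij => hQdisj i j hij) (fun j _ => hcells j)]
          refine setIntegral_mono_set hFint (ae_of_all _ fun p => hF0 p)
            (HasSubset.Subset.eventuallyLE ?_)
          intro p hp
          simp only [mem_iUnion] at hp
          obtain ⟨j, _, hj⟩ := hp
          exact hcellsub j hj
      _ = (100:ℝ)^2 * δ * ∫ p in Ω, F p := by norm_num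
  have h0 : (0:ℝ) ≤ (100:ℝ)^2 * δ * ∫ p in Ω, F p := by positivity
  exact tsum_le_of_sum_le' h0 hsum
end

section
/- Let Λ(ε, μ) be the unique real-analytic solution near Λ = 1/4 of the equation T(ε, μ, Λ) := √Λ cos(√Λ π) + μ sin(√Λ π) − ε³ μ Λ^{3/2} θ(ε²Λ) cos(√Λ π) = 0 with Λ(0,0) = 1/4, where θ(β) := −∑_{j=1}^∞ 1/( j √(4j²−β)(2j+√(4j²−β)) ). Then for all sufficiently small ε, the second partial derivative of Λ with respect to μ at μ = 0 is given by ∂²Λ/∂μ² (ε, 0) = (1/π²) · ( −8 + ε³ π θ(ε²/4) ). -/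
open Real Set

/-- The function `θ(β) = -∑_{j≥1} 1/( j √(4j²-β) (2j+√(4j²-β)) )`. -/
noncomputable def theta (β : ℝ) : ℝ :=
  -∑' j : ℕ+, 1/(((j:ℕ):ℝ) * Real.sqrt (4*((j:ℕ):ℝ)^2 - β) *
      (2*((j:ℕ):ℝ) + Real.sqrt (4*((j:ℕ):ℝ)^2 - β)))

/-- `T(ε, μ, Λ) = √Λ cos(√Λ π) + μ sin(√Λ π) - ε³ μ Λ^{3/2} θ(ε²Λ) cos(√Λ π)`. -/
noncomputable def Tfun (ε μ Λ : ℝ) : ℝ :=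
  Real.sqrt Λ * Real.cos (Real.sqrt Λ * π) + μ * Real.sin (Real.sqrt Λ * π)
    - ε^3 * μ * Λ ^ ((3:ℝ)/2) * theta (ε^2*Λ) * Real.cos (Real.sqrt Λ * π)

/-! ### Auxiliary lemmas -/

lemma sqrt_quarter : Real.sqrt (1/4) = 1/2 := by
  rw [show (1/4:ℝ) = (1/2)^2 by norm_num, Real.sqrt_sq (by norm_num : (0:ℝ) ≤ 1/2)]

lemma cos_half_pi : Real.cos ((1/2:ℝ) * π) = 0 := by
  rw [show (1/2:ℝ)*π = π/2 by ring, Real.cos_pi_div_two]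

lemma sin_half_pi : Real.sin ((1/2:ℝ) * π) = 1 := by
  rw [show (1/2:ℝ)*π = π/2 by ring, Real.sin_pi_div_two]

lemma quarter_rpow : (1/4:ℝ) ^ ((3:ℝ)/2) = 1/8 := by
  rw [show (3:ℝ)/2 = (1/2)*3 by norm_num, Real.rpow_mul (by norm_num : (0:ℝ) ≤ 1/4),
    ← Real.sqrt_eq_rpow, sqrt_quarter,
    show (3:ℝ) = ((3:ℕ):ℝ) by norm_num, Real.rpow_natCast]
  norm_num

/-- Continuity of `theta` on `Iio 2`. -/
lemma theta_continuousOn : ContinuousOn theta (Set.Iio (2:ℝ)) := by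
  have key : ContinuousOn (fun β : ℝ => ∑' j : ℕ+,
      1/(((j:ℕ):ℝ) * Real.sqrt (4*((j:ℕ):ℝ)^2 - β) *
      (2*((j:ℕ):ℝ) + Real.sqrt (4*((j:ℕ):ℝ)^2 - β)))) (Set.Iio (2:ℝ)) := by
    apply continuousOn_tsum (u := fun j : ℕ+ => 1/(((j:ℕ):ℝ))^2)
    · intro j
      have hx1 : (1:ℝ) ≤ ((j:ℕ):ℝ) := by exact_mod_cast j.one_le
      apply ContinuousOn.div continuousOn_const
      · apply ContinuousOn.mul
        · exact (continuousOn_const.mul ((Real.continuous_sqrt.comp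
            (by continuity)).continuousOn))
        · exact continuousOn_const.add ((Real.continuous_sqrt.comp (by continuity)).continuousOn)
      · intro β hβ
        simp only [Set.mem_Iio] at hβ
        have h2 : (2:ℝ) ≤ 4*((j:ℕ):ℝ)^2 - β := by nlinarith
        have hs : (1:ℝ) ≤ Real.sqrt (4*((j:ℕ):ℝ)^2 - β) := by
          rw [show (1:ℝ) = Real.sqrt 1 by simp]
          exact Real.sqrt_le_sqrt (by linarith)
        positivity
    · have hs : Summable (fun n : ℕ => 1/((n:ℝ))^2) :=
        Real.summable_one_div_nat_pow.mpr (by norm_num)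
      exact hs.comp_injective (fun a b h => PNat.coe_injective h)
    · intro j β hβ
      simp only [Set.mem_Iio] at hβ
      have hx1 : (1:ℝ) ≤ ((j:ℕ):ℝ) := by exact_mod_cast j.one_le
      have h2 : (2:ℝ) ≤ 4*((j:ℕ):ℝ)^2 - β := by nlinarith
      have hs : (1:ℝ) ≤ Real.sqrt (4*((j:ℕ):ℝ)^2 - β) := by
        rw [show (1:ℝ) = Real.sqrt 1 by simp]
        exact Real.sqrt_le_sqrt (by linarith)
      have hden : ((j:ℕ):ℝ)^2 ≤ ((j:ℕ):ℝ) * Real.sqrt (4*((j:ℕ):ℝ)^2 - β) *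
          (2*((j:ℕ):ℝ) + Real.sqrt (4*((j:ℕ):ℝ)^2 - β)) := by
        nlinarith [mul_le_mul_of_nonneg_left hs (by positivity : (0:ℝ) ≤ 2*((j:ℕ):ℝ)^2),
          mul_nonneg (le_trans zero_le_one hx1)
            (sq_nonneg (Real.sqrt (4*((j:ℕ):ℝ)^2 - β))), sq_nonneg ((j:ℕ):ℝ)]
      have hpos : (0:ℝ) < ((j:ℕ):ℝ)^2 := by positivity
      rw [Real.norm_eq_abs, abs_of_nonneg (by positivity)]
      exact one_div_le_one_div_of_le hpos hden
  have : theta = fun β => -(fun β : ℝ => ∑' j : ℕ+,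
      1/(((j:ℕ):ℝ) * Real.sqrt (4*((j:ℕ):ℝ)^2 - β) *
      (2*((j:ℕ):ℝ) + Real.sqrt (4*((j:ℕ):ℝ)^2 - β)))) β := rfl
  rw [this]
  exact key.neg

/-- Derivative of a product where one factor vanishes and the other is merely continuous. -/
lemma hasDerivAt_mul_of_zero {P q : ℝ → ℝ} {x p : ℝ} (hP : HasDerivAt P p x)
    (h0 : P x = 0) (hq : ContinuousAt q x) :
    HasDerivAt (fun y => P y * q y) (p * q x) x := by
  rw [hasDerivAt_iff_tendsto_slope] at hP ⊢
  have hq' : Filter.Tendsto q (nhdsWithin x {x}ᶜ) (nhds (q x)) :=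
    hq.continuousWithinAt.tendsto
  refine (hP.mul hq').congr' ?_
  filter_upwards [self_mem_nhdsWithin] with y hy
  rw [slope_def_field, slope_def_field, h0]
  ring

/-! ### Derivatives of the building blocks -/

noncomputable def Ffun (L : ℝ) : ℝ := Real.sqrt L * Real.cos (Real.sqrt L * π)

noncomputable def Fd (L : ℝ) : ℝ :=
  Real.cos (Real.sqrt L * π)/(2*Real.sqrt L) - π/2 * Real.sin (Real.sqrt L * π)

noncomputable def Gfun (L : ℝ) : ℝ := Real.sin (Real.sqrt L * π)

noncomputable def hfun (ε L : ℝ) : ℝ :=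
  L ^ ((3:ℝ)/2) * theta (ε^2*L) * Real.cos (Real.sqrt L * π)

lemma Tfun_decomp (ε μ L : ℝ) : Tfun ε μ L = Ffun L + μ * Gfun L - ε^3 * μ * hfun ε L := by
  unfold Tfun Ffun Gfun hfun; ring

lemma hasDerivAt_sqrtpi {L : ℝ} (hL : 0 < L) :
    HasDerivAt (fun x => Real.sqrt x * π) (π/(2*Real.sqrt L)) L := by
  have := (Real.hasDerivAt_sqrt (ne_of_gt hL)).mul_const π
  refine this.congr_deriv ?_
  ring

lemma hasDerivAt_cos_sqrtpi {L : ℝ} (hL : 0 < L) :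
    HasDerivAt (fun x => Real.cos (Real.sqrt x * π))
      (-Real.sin (Real.sqrt L * π) * (π/(2*Real.sqrt L))) L :=
  (Real.hasDerivAt_cos _).comp L (hasDerivAt_sqrtpi hL)

lemma hasDerivAt_sin_sqrtpi {L : ℝ} (hL : 0 < L) :
    HasDerivAt (fun x => Real.sin (Real.sqrt x * π))
      (Real.cos (Real.sqrt L * π) * (π/(2*Real.sqrt L))) L :=
  (Real.hasDerivAt_sin _).comp L (hasDerivAt_sqrtpi hL)

lemma hasDerivAt_Ffun {L : ℝ} (hL : 0 < L) : HasDerivAt Ffun (Fd L) L := by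
  have hs : Real.sqrt L ≠ 0 := (Real.sqrt_pos.mpr hL).ne'
  have h1 := (Real.hasDerivAt_sqrt (ne_of_gt hL)).mul (hasDerivAt_cos_sqrtpi hL)
  refine h1.congr_deriv ?_
  unfold Fd
  field_simp
  ring

lemma Ffun_quarter : Ffun (1/4) = 0 := by
  unfold Ffun; rw [sqrt_quarter, cos_half_pi, mul_zero]

lemma Fd_quarter : Fd (1/4) = -(π/2) := by
  unfold Fd; rw [sqrt_quarter, cos_half_pi, sin_half_pi]; ring

lemma Gfun_quarter : Gfun (1/4) = 1 := by
  unfold Gfun; rw [sqrt_quarter, sin_half_pi]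

lemma hfun_quarter (ε : ℝ) : hfun ε (1/4) = 0 := by
  unfold hfun; rw [sqrt_quarter, cos_half_pi, mul_zero]

lemma hasDerivAt_Fd : HasDerivAt Fd (-π) (1/4) := by
  have h4 : (0:ℝ) < 1/4 := by norm_num
  have hs : Real.sqrt (1/4) = 1/2 := sqrt_quarter
  have h2s : HasDerivAt (fun x : ℝ => 2*Real.sqrt x) (2*(1/(2*Real.sqrt (1/4)))) (1/4) :=
    (Real.hasDerivAt_sqrt (ne_of_gt h4)).const_mul 2
  have ht1 := (hasDerivAt_cos_sqrtpi h4).div h2s (by rw [hs]; norm_num)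
  have ht2 := (hasDerivAt_sin_sqrtpi h4).const_mul (π/2)
  have h := ht1.sub ht2
  refine h.congr_deriv ?_
  rw [hs, cos_half_pi, sin_half_pi]
  norm_num

lemma hasDerivAt_Gfun : HasDerivAt Gfun 0 (1/4) := by
  have := hasDerivAt_sin_sqrtpi (by norm_num : (0:ℝ) < 1/4)
  refine this.congr_deriv ?_
  rw [sqrt_quarter, cos_half_pi]
  ring

lemma hasDerivAt_hfun (ε : ℝ) (hθ : ContinuousAt theta (ε^2/4)) :
    HasDerivAt (hfun ε) (-(π/8) * theta (ε^2/4)) (1/4) := by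
  have h4 : (0:ℝ) < 1/4 := by norm_num
  have heq : hfun ε = fun x => (x ^ ((3:ℝ)/2) * Real.cos (Real.sqrt x * π)) * theta (ε^2*x) := by
    funext x; unfold hfun; ring
  rw [heq]
  have hP : HasDerivAt (fun x : ℝ => x ^ ((3:ℝ)/2) * Real.cos (Real.sqrt x * π))
      (-(π/8)) (1/4) := by
    have h1 : HasDerivAt (fun x : ℝ => x ^ ((3:ℝ)/2))
        ((3:ℝ)/2 * (1/4:ℝ) ^ ((3:ℝ)/2 - 1)) (1/4) :=
      Real.hasDerivAt_rpow_const (Or.inl (by norm_num))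
    have h := h1.mul (hasDerivAt_cos_sqrtpi h4)
    refine h.congr_deriv ?_
    rw [sqrt_quarter, cos_half_pi, sin_half_pi, quarter_rpow]
    norm_num
    ring
  have h0 : (fun x : ℝ => x ^ ((3:ℝ)/2) * Real.cos (Real.sqrt x * π)) (1/4) = 0 := by
    simp only [sqrt_quarter, cos_half_pi, mul_zero]
  have hq : ContinuousAt (fun x : ℝ => theta (ε^2*x)) (1/4) := by
    have hlin : ContinuousAt (fun x : ℝ => ε^2*x) (1/4) :=
      (continuous_const.mul continuous_id).continuousAt
    have : ε^2*(1/4) = ε^2/4 := by ring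
    exact (this ▸ hθ).comp hlin
  have := hasDerivAt_mul_of_zero hP h0 hq
  convert this using 1
  rw [show ε^2*(1/4) = ε^2/4 by ring]

/-! ### Main theorem -/

/-- if `Λ(ε,μ)` is the (jointly real-analytic, locally unique near `1/4`)
solution of `T(ε, μ, Λ(ε,μ)) = 0` with `Λ(0,0) = 1/4`, then for all sufficiently small `ε`
one has `∂²Λ/∂μ²(ε, 0) = (1/π²)(-8 + ε³ π θ(ε²/4))`. -/
theorem stmt7 (δ r : ℝ) (hδ : 0 < δ) (hr : 0 < r) (Λ : ℝ → ℝ → ℝ)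
    (hanal : AnalyticOnNhd ℝ (fun p : ℝ × ℝ => Λ p.1 p.2)
      (Set.Ioo (-δ) δ ×ˢ Set.Ioo (-δ) δ))
    (h00 : Λ 0 0 = 1/4)
    (hroot : ∀ ε μ : ℝ, |ε| < δ → |μ| < δ → Tfun ε μ (Λ ε μ) = 0)
    (hnear : ∀ ε μ : ℝ, |ε| < δ → |μ| < δ → |Λ ε μ - 1/4| < r)
    (huniq : ∀ ε μ : ℝ, |ε| < δ → |μ| < δ →
      ∀ L : ℝ, Tfun ε μ L = 0 → |L - 1/4| < r → L = Λ ε μ) :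
    ∃ δ' : ℝ, 0 < δ' ∧ δ' ≤ δ ∧
      ∀ ε : ℝ, |ε| < δ' →
        deriv (deriv (fun μ => Λ ε μ)) 0
          = (1/π^2) * (-8 + ε^3 * π * theta (ε^2/4)) := by
  refine ⟨min δ 1, lt_min hδ one_pos, min_le_left _ _, ?_⟩
  intro ε hε
  have hεδ : |ε| < δ := lt_of_lt_of_le hε (min_le_left _ _)
  have hε1 : |ε| < 1 := lt_of_lt_of_le hε (min_le_right _ _)
  have h0δ : |(0:ℝ)| < δ := by simpa using hδ
  have hπ := Real.pi_pos
  have hπ0 : π ≠ 0 := ne_of_gt hπ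
  set u : ℝ → ℝ := fun μ => Λ ε μ with hu_def
  -- continuity of theta at ε²/4
  have hθ : ContinuousAt theta (ε^2/4) := by
    have h1 : ε^2/4 < 2 := by
      obtain ⟨he1, he2⟩ := abs_lt.mp hε1
      nlinarith
    exact theta_continuousOn.continuousAt (Iio_mem_nhds h1)
  -- value at μ = 0
  have hu0 : u 0 = 1/4 := by
    have h14 : Tfun ε 0 (1/4) = 0 := by
      unfold Tfun
      rw [sqrt_quarter, cos_half_pi]
      ring
    exact (huniq ε 0 hεδ h0δ (1/4) h14 (by simpa using hr)).symm
  -- analyticity of u near 0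
  have hmem : ((ε, (0:ℝ)) : ℝ × ℝ) ∈ Set.Ioo (-δ) δ ×ˢ Set.Ioo (-δ) δ := by
    obtain ⟨he1, he2⟩ := abs_lt.mp hεδ
    have h0mem : (0:ℝ) ∈ Set.Ioo (-δ) δ := Set.mem_Ioo.mpr ⟨by linarith, hδ⟩
    have hεmem : ε ∈ Set.Ioo (-δ) δ := Set.mem_Ioo.mpr ⟨he1, he2⟩
    exact Set.mem_prod.mpr ⟨hεmem, h0mem⟩
  have hA : AnalyticAt ℝ u 0 := by
    have h1 : AnalyticAt ℝ (fun p : ℝ × ℝ => Λ p.1 p.2) (ε, 0) := hanal _ hmem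
    have h2 : AnalyticAt ℝ (fun μ : ℝ => ((ε, μ) : ℝ × ℝ)) 0 :=
      analyticAt_const.prod analyticAt_id
    exact h1.comp h2
  obtain ⟨ρ, hρ, hball⟩ := Metric.eventually_nhds_iff.mp hA.eventually_analyticAt
  have hAN : AnalyticOnNhd ℝ u (Metric.ball (0:ℝ) ρ) :=
    fun x hx => hball (Metric.mem_ball.mp hx)
  have hAd : AnalyticAt ℝ (deriv u) 0 := hAN.deriv 0 (Metric.mem_ball_self hρ)
  set a := deriv u 0 with ha_def
  set b := deriv (deriv u) 0 with hb_def
  have hua : HasDerivAt u a 0 := hA.differentiableAt.hasDerivAt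
  have hub : HasDerivAt (deriv u) b 0 := hAd.differentiableAt.hasDerivAt
  have hu_ev : ∀ᶠ μ in nhds (0:ℝ), HasDerivAt u (deriv u μ) μ :=
    hA.eventually_analyticAt.mono fun y hy => hy.differentiableAt.hasDerivAt
  have hucont : Filter.Tendsto u (nhds 0) (nhds (1/4)) := by
    have := hua.continuousAt
    rwa [ContinuousAt, hu0] at this
  have hupos : ∀ᶠ μ in nhds (0:ℝ), 0 < u μ :=
    hucont.eventually (eventually_gt_nhds (by norm_num))
  have hμδ : ∀ᶠ μ in nhds (0:ℝ), |μ| < δ := by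
    filter_upwards [Metric.ball_mem_nhds (0:ℝ) hδ] with μ hμ
    simpa [Real.dist_eq] using hμ
  have hφ : ∀ᶠ μ in nhds (0:ℝ), Tfun ε μ (u μ) = 0 :=
    hμδ.mono fun μ hμ => hroot ε μ hεδ hμ
  -- derivatives of compositions at 0
  have hF14 : HasDerivAt Ffun (Fd (1/4)) (u 0) := by
    rw [hu0]; exact hasDerivAt_Ffun (by norm_num)
  have hFu : HasDerivAt (fun μ => Ffun (u μ)) (Fd (1/4) * a) 0 := by
    simpa [Function.comp_def] using hF14.comp 0 hua
  have hG14 : HasDerivAt Gfun 0 (u 0) := by rw [hu0]; exact hasDerivAt_Gfun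
  have hGu : HasDerivAt (fun μ => Gfun (u μ)) (0 * a) 0 := by
    simpa [Function.comp_def] using hG14.comp 0 hua
  have hh14 : HasDerivAt (hfun ε) (-(π/8) * theta (ε^2/4)) (u 0) := by
    rw [hu0]; exact hasDerivAt_hfun ε hθ
  have hhu : HasDerivAt (fun μ => hfun ε (u μ)) (-(π/8) * theta (ε^2/4) * a) 0 := by
    simpa [Function.comp_def] using hh14.comp 0 hua
  -- slope limits
  have hFslope : Filter.Tendsto (fun μ => Ffun (u μ) / μ)
      (nhdsWithin (0:ℝ) {(0:ℝ)}ᶜ) (nhds (Fd (1/4) * a)) := by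
    refine (hasDerivAt_iff_tendsto_slope.mp hFu).congr' ?_
    filter_upwards [self_mem_nhdsWithin] with μ hμ
    simp only [slope_def_field, sub_zero]
    rw [hu0, Ffun_quarter, sub_zero]
  have hGslope : Filter.Tendsto (fun μ => (Gfun (u μ) - 1) / μ)
      (nhdsWithin (0:ℝ) {(0:ℝ)}ᶜ) (nhds (0 * a)) := by
    refine (hasDerivAt_iff_tendsto_slope.mp hGu).congr' ?_
    filter_upwards [self_mem_nhdsWithin] with μ hμ
    simp only [slope_def_field, sub_zero]
    rw [hu0, Gfun_quarter]
  have hhslope : Filter.Tendsto (fun μ => hfun ε (u μ) / μ)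
      (nhdsWithin (0:ℝ) {(0:ℝ)}ᶜ) (nhds (-(π/8) * theta (ε^2/4) * a)) := by
    refine (hasDerivAt_iff_tendsto_slope.mp hhu).congr' ?_
    filter_upwards [self_mem_nhdsWithin] with μ hμ
    simp only [slope_def_field, sub_zero]
    rw [hu0, hfun_quarter, sub_zero]
  -- continuity limits
  have hGcont : Filter.Tendsto (fun μ => Gfun (u μ)) (nhds 0) (nhds 1) := by
    have h := hGu.continuousAt.tendsto
    beta_reduce at h
    rw [hu0, Gfun_quarter] at h
    exact h
  have hhcont : Filter.Tendsto (fun μ => hfun ε (u μ)) (nhds 0) (nhds 0) := by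
    have h := hhu.continuousAt.tendsto
    beta_reduce at h
    rw [hu0, hfun_quarter] at h
    exact h
  -- Step 1: first derivative, a = 2/π
  have hψ1 : Filter.Tendsto (fun μ => Tfun ε μ (u μ) / μ)
      (nhdsWithin (0:ℝ) {(0:ℝ)}ᶜ) (nhds (Fd (1/4) * a + 1 - ε^3 * 0)) := by
    have h2 : Filter.Tendsto (fun μ => Gfun (u μ)) (nhdsWithin (0:ℝ) {(0:ℝ)}ᶜ) (nhds 1) :=
      tendsto_nhdsWithin_of_tendsto_nhds hGcont
    have h3 : Filter.Tendsto (fun μ => hfun ε (u μ)) (nhdsWithin (0:ℝ) {(0:ℝ)}ᶜ) (nhds 0) :=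
      tendsto_nhdsWithin_of_tendsto_nhds hhcont
    refine ((hFslope.add h2).sub (h3.const_mul (ε^3))).congr' ?_
    filter_upwards [self_mem_nhdsWithin] with μ hμ
    have hμ' : μ ≠ 0 := by simpa using hμ
    rw [Tfun_decomp]
    field_simp
  have hzero1 : Filter.Tendsto (fun μ => Tfun ε μ (u μ) / μ)
      (nhdsWithin (0:ℝ) {(0:ℝ)}ᶜ) (nhds 0) := by
    refine Filter.Tendsto.congr' ?_ tendsto_const_nhds
    filter_upwards [hφ.filter_mono nhdsWithin_le_nhds] with μ hμ
    rw [hμ, zero_div]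
  have ha : a = 2/π := by
    have he := tendsto_nhds_unique hψ1 hzero1
    rw [Fd_quarter] at he
    field_simp at he ⊢
    linarith
  -- Step 2: L'Hôpital for (Ffun (u μ) + μ)/μ²
  have hN' : ∀ᶠ μ in nhds (0:ℝ),
      HasDerivAt (fun t => Ffun (u t) + t) (Fd (u μ) * deriv u μ + 1) μ := by
    filter_upwards [hu_ev, hupos] with μ hd hp
    exact ((hasDerivAt_Ffun hp).comp μ hd).add (hasDerivAt_id' μ)
  have hgev : ∀ᶠ μ in nhds (0:ℝ), HasDerivAt (fun t : ℝ => t^2) (2*μ) μ :=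
    Filter.Eventually.of_forall fun μ => by simpa using hasDerivAt_pow 2 μ
  have hNd0 : HasDerivAt (fun μ => Fd (u μ) * deriv u μ + 1)
      ((-π * a) * a + Fd (1/4) * b) 0 := by
    have hFd0 : HasDerivAt Fd (-π) (u 0) := by rw [hu0]; exact hasDerivAt_Fd
    have h1 : HasDerivAt (fun μ => Fd (u μ)) (-π * a) 0 := by
      simpa [Function.comp_def] using hFd0.comp 0 hua
    have h2 := (h1.mul hub).add_const 1
    rw [hu0, ← ha_def] at h2
    exact h2
  have hN'0 : Fd (u 0) * deriv u 0 + 1 = 0 := by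
    rw [hu0, Fd_quarter, ← ha_def, ha]
    field_simp
    ring
  have hslopeN' : Filter.Tendsto (fun μ => (Fd (u μ) * deriv u μ + 1) / (2*μ))
      (nhdsWithin (0:ℝ) {(0:ℝ)}ᶜ) (nhds (((-π * a) * a + Fd (1/4) * b)/2)) := by
    refine ((hasDerivAt_iff_tendsto_slope.mp hNd0).div_const 2).congr' ?_
    filter_upwards [self_mem_nhdsWithin] with μ hμ
    rw [slope_def_field]
    show ((Fd (u μ) * deriv u μ + 1) - (Fd (u 0) * deriv u 0 + 1)) / (μ - 0) / 2
      = (Fd (u μ) * deriv u μ + 1) / (2*μ)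
    rw [hN'0, sub_zero, sub_zero, div_div, mul_comm μ 2]
  have hNtend0 : Filter.Tendsto (fun μ => Ffun (u μ) + μ)
      (nhdsWithin (0:ℝ) {(0:ℝ)}ᶜ) (nhds 0) := by
    have hc : Filter.Tendsto (fun μ => Ffun (u μ)) (nhds 0) (nhds 0) := by
      have h := hFu.continuousAt.tendsto
      beta_reduce at h
      rw [hu0, Ffun_quarter] at h
      exact h
    have hid : Filter.Tendsto (fun μ : ℝ => μ) (nhds 0) (nhds 0) := Filter.tendsto_id
    have h3 := hc.add hid
    rw [add_zero] at h3
    exact tendsto_nhdsWithin_of_tendsto_nhds h3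
  have hgtend0 : Filter.Tendsto (fun μ : ℝ => μ^2)
      (nhdsWithin (0:ℝ) {(0:ℝ)}ᶜ) (nhds 0) := by
    have := (continuous_pow 2).tendsto (0:ℝ)
    simp only [ne_eq, OfNat.ofNat_ne_zero, not_false_eq_true, zero_pow] at this
    exact tendsto_nhdsWithin_of_tendsto_nhds this
  have hlhop : Filter.Tendsto (fun μ => (Ffun (u μ) + μ)/μ^2)
      (nhdsWithin (0:ℝ) {(0:ℝ)}ᶜ) (nhds (((-π * a) * a + Fd (1/4) * b)/2)) := by
    refine HasDerivAt.lhopital_zero_nhdsNE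
      (hN'.filter_mono nhdsWithin_le_nhds) (hgev.filter_mono nhdsWithin_le_nhds)
      ?_ hNtend0 hgtend0 hslopeN'
    filter_upwards [self_mem_nhdsWithin] with μ hμ
    have hμ' : μ ≠ 0 := by simpa using hμ
    exact mul_ne_zero two_ne_zero hμ'
  -- Step 2: combine
  have hψ2 : Filter.Tendsto (fun μ => Tfun ε μ (u μ) / μ^2)
      (nhdsWithin (0:ℝ) {(0:ℝ)}ᶜ)
      (nhds ((((-π * a) * a + Fd (1/4) * b)/2) + 0 * a
        - ε^3 * (-(π/8) * theta (ε^2/4) * a))) := by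
    refine ((hlhop.add hGslope).sub (hhslope.const_mul (ε^3))).congr' ?_
    filter_upwards [self_mem_nhdsWithin] with μ hμ
    have hμ' : μ ≠ 0 := by simpa using hμ
    rw [Tfun_decomp]
    field_simp
    ring
  have hzero2 : Filter.Tendsto (fun μ => Tfun ε μ (u μ) / μ^2)
      (nhdsWithin (0:ℝ) {(0:ℝ)}ᶜ) (nhds 0) := by
    refine Filter.Tendsto.congr' ?_ tendsto_const_nhds
    filter_upwards [hφ.filter_mono nhdsWithin_le_nhds] with μ hμ
    rw [hμ, zero_div]
  have hfinal := tendsto_nhds_unique hψ2 hzero2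
  rw [Fd_quarter, ha] at hfinal
  field_simp at hfinal
  have hπ2 : (π:ℝ)^2 ≠ 0 := pow_ne_zero 2 hπ0
  have h2 : π^2 * (π^2 * b) = π^2 * (-8 + ε^3*π*theta (ε^2/4)) := by
    linear_combination (-π^2/8 : ℝ) * hfinal
  have h3 := mul_left_cancel₀ hπ2 h2
  field_simp
  linear_combination h3
end
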